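/- For a monic real polynomial f of degree d, the number of distinct complex roots of f equals the rank of its Hermite matrix H(f). -/

import Mathlib

open Polynomial Matrix Finset

section BaseChange

variable {d : ℕ}

private lemma complexify_mulVec (A : Matrix (Fin d) (Fin d) ℝ) (v : Fin d → ℝ) :
    (A.map (algebraMap ℝ ℂ)).mulVec (fun j => (v j : ℂ)) = fun i => ((A.mulVec v) i : ℂ) := by
  funext i
  exact (RingHom.map_mulVec (algebraMap ℝ ℂ) A v i).symm

set_option maxHeartbeats 1000000 in
private lemma rank_map_complex (A : Matrix (Fin d) (Fin d) ℝ) :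
    (A.map (algebraMap ℝ ℂ)).rank = A.rank := by
  classical
  obtain ⟨k, vb, hvb_li, hvb_span⟩ :
      ∃ (k : ℕ) (vb : Fin k → (Fin d → ℝ)), LinearIndependent ℝ vb ∧
        Submodule.span ℝ (Set.range vb) = LinearMap.ker A.mulVecLin := by
    let b := Module.finBasis ℝ (LinearMap.ker A.mulVecLin)
    refine ⟨_, fun i => (b i : Fin d → ℝ),
      b.linearIndependent.map' _ (Submodule.ker_subtype _), ?_⟩
    have : (Set.range fun i => ((b i : Fin d → ℝ)))
        = (LinearMap.ker A.mulVecLin).subtype '' (Set.range b) := by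
      rw [← Set.range_comp]; rfl
    rw [this, ← Submodule.map_span, b.span_eq, Submodule.map_subtype_top]
  have hvb_ker : ∀ i, A.mulVec (vb i) = 0 := by
    intro i
    have : vb i ∈ LinearMap.ker A.mulVecLin := by
      rw [← hvb_span]; exact Submodule.subset_span ⟨i, rfl⟩
    simpa [Matrix.mulVecLin_apply] using this
  have hfinK : Module.finrank ℝ (LinearMap.ker A.mulVecLin) = k := by
    rw [← hvb_span, finrank_span_eq_card hvb_li, Fintype.card_fin]
  set c : Fin k → (Fin d → ℂ) := fun i j => ((vb i j : ℝ) : ℂ) with hc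
  have hc_li : LinearIndependent ℂ c := by
    rw [Fintype.linearIndependent_iff]
    intro g hg i
    have h1 : ∀ j, ∑ i, g i * ((vb i j : ℝ) : ℂ) = 0 := by
      intro j
      have := congrFun hg j
      simpa [hc, Finset.sum_apply] using this
    have hre : ∑ i, (g i).re • vb i = 0 := by
      funext j
      have := congrArg Complex.re (h1 j)
      simpa [Complex.re_sum, Complex.mul_re, Finset.sum_apply] using this
    have him : ∑ i, (g i).im • vb i = 0 := by
      funext j
      have := congrArg Complex.im (h1 j)
      simpa [Complex.im_sum, Complex.mul_im, Finset.sum_apply] using this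
    exact Complex.ext
      (Fintype.linearIndependent_iff.mp hvb_li (fun i => (g i).re) hre i)
      (Fintype.linearIndependent_iff.mp hvb_li (fun i => (g i).im) him i)
  have claim1 : ∀ w, w ∈ LinearMap.ker A.mulVecLin →
      (fun j => ((w j : ℝ) : ℂ)) ∈ Submodule.span ℂ (Set.range c) := by
    intro w hw
    rw [← hvb_span] at hw
    induction hw using Submodule.span_induction with
    | mem x hx =>
        obtain ⟨i, rfl⟩ := hx
        exact Submodule.subset_span ⟨i, rfl⟩
    | zero =>
        have h0 : (fun j => (((0 : Fin d → ℝ) j : ℝ) : ℂ)) = (0 : Fin d → ℂ) := by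
          funext j; simp
        rw [h0]; exact Submodule.zero_mem _
    | add x y hx hy ihx ihy =>
        have : (fun j => (((x + y) j : ℝ) : ℂ))
            = (fun j => ((x j : ℝ) : ℂ)) + (fun j => ((y j : ℝ) : ℂ)) := by
          funext j; simp
        rw [this]; exact Submodule.add_mem _ ihx ihy
    | smul r x hx ihx =>
        have : (fun j => (((r • x) j : ℝ) : ℂ))
            = ((r : ℂ)) • (fun j => ((x j : ℝ) : ℂ)) := by
          funext j; simp
        rw [this]; exact Submodule.smul_mem _ _ ihx
  have claim2 : LinearMap.ker (A.map (algebraMap ℝ ℂ)).mulVecLin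
      = Submodule.span ℂ (Set.range c) := by
    apply le_antisymm
    · intro z hz
      rw [LinearMap.mem_ker, Matrix.mulVecLin_apply] at hz
      have hzre : A.mulVec (fun j => (z j).re) = 0 := by
        funext i
        have h0 : ((A.map (algebraMap ℝ ℂ)).mulVec z) i = 0 := by rw [hz]; rfl
        have := congrArg Complex.re h0
        simpa [Matrix.mulVec, dotProduct, Complex.re_sum, Complex.mul_re,
          Matrix.map_apply] using this
      have hzim : A.mulVec (fun j => (z j).im) = 0 := by
        funext i
        have h0 : ((A.map (algebraMap ℝ ℂ)).mulVec z) i = 0 := by rw [hz]; rfl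
        have := congrArg Complex.im h0
        simpa [Matrix.mulVec, dotProduct, Complex.im_sum, Complex.mul_im,
          Matrix.map_apply] using this
      have hdecomp : z = (fun j => (((z j).re : ℝ) : ℂ))
          + Complex.I • (fun j => (((z j).im : ℝ) : ℂ)) := by
        funext j
        simp only [Pi.add_apply, Pi.smul_apply, smul_eq_mul]
        rw [mul_comm, Complex.re_add_im]
      rw [hdecomp]
      refine Submodule.add_mem _
        (claim1 _ (by simpa [LinearMap.mem_ker, Matrix.mulVecLin_apply] using hzre))
        (Submodule.smul_mem _ _
          (claim1 _ (by simpa [LinearMap.mem_ker, Matrix.mulVecLin_apply] using hzim)))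
    · rw [Submodule.span_le]
      rintro _ ⟨i, rfl⟩
      rw [SetLike.mem_coe, LinearMap.mem_ker, Matrix.mulVecLin_apply]
      have := complexify_mulVec A (vb i)
      rw [hvb_ker i] at this
      exact this.trans (funext fun _ => by simp)
  have hfinB : Module.finrank ℂ (LinearMap.ker (A.map (algebraMap ℝ ℂ)).mulVecLin) = k := by
    rw [claim2, finrank_span_eq_card hc_li, Fintype.card_fin]
  have h1 := LinearMap.finrank_range_add_finrank_ker A.mulVecLin
  have h2 := LinearMap.finrank_range_add_finrank_ker (A.map (algebraMap ℝ ℂ)).mulVecLin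
  rw [hfinK] at h1
  rw [hfinB] at h2
  rw [Module.finrank_pi] at h1 h2
  rw [Matrix.rank, Matrix.rank]
  omega

end BaseChange

theorem hermite_rank_eq_card_distinct_roots (d : ℕ) (hd : 0 < d)
    (f : Polynomial ℝ) (hmonic : f.Monic) (hdeg : f.natDegree = d)
    (H : Matrix (Fin d) (Fin d) ℝ)
    (hH : ∀ i j : Fin d,
      (H i j : ℂ) =
        (((f.map (algebraMap ℝ ℂ)).roots.map (fun r => r ^ ((i : ℕ) + (j : ℕ)))).sum)) :
    (f.map (algebraMap ℝ ℂ)).roots.toFinset.card = H.rank := by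
  classical
  set R := (f.map (algebraMap ℝ ℂ)).roots with hR
  set t := R.toFinset.card with htdef
  have ht : t ≤ d := by
    calc t ≤ Multiset.card R := Multiset.toFinset_card_le _
    _ ≤ (f.map (algebraMap ℝ ℂ)).natDegree := Polynomial.card_roots' _
    _ = d := by rw [hmonic.natDegree_map, hdeg]
  set e := R.toFinset.equivFin with hedef
  set ρ : Fin t → ℂ := fun k => (e.symm k : ℂ) with hρ
  have hρinj : Function.Injective ρ :=
    fun a b hab => e.symm.injective (Subtype.ext hab)
  have hρmem : ∀ k, ρ k ∈ R.toFinset := fun k => (e.symm k).2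
  set W : Matrix (Fin d) (Fin t) ℂ := fun i k => ρ k ^ (i : ℕ) with hW
  set D : Matrix (Fin t) (Fin t) ℂ :=
    Matrix.diagonal (fun k => (R.count (ρ k) : ℂ)) with hD
  -- factorization
  have hfact : H.map (algebraMap ℝ ℂ) = W * D * Wᵀ := by
    ext i j
    have : (H.map (algebraMap ℝ ℂ)) i j = (H i j : ℂ) := rfl
    rw [this, hH i j]
    have hms : ((R.map (fun r => r ^ ((i : ℕ) + (j : ℕ)))).sum)
        = ∑ r ∈ R.toFinset, R.count r • r ^ ((i : ℕ) + (j : ℕ)) :=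
      Finset.sum_multiset_map_count R _
    rw [hms]
    have h1 : ∑ r ∈ R.toFinset, R.count r • r ^ ((i : ℕ) + (j : ℕ))
        = ∑ k : Fin t, R.count (ρ k) • (ρ k) ^ ((i : ℕ) + (j : ℕ)) := by
      rw [← Finset.sum_coe_sort R.toFinset (fun r => R.count r • r ^ ((i : ℕ) + (j : ℕ)))]
      exact (Equiv.sum_comp e.symm
        (fun x : R.toFinset => R.count (x : ℂ) • (x : ℂ) ^ ((i : ℕ) + (j : ℕ)))).symm
    rw [h1]
    have h2 : (W * D * Wᵀ) i j
        = ∑ k : Fin t, (W i k * (R.count (ρ k) : ℂ)) * W j k := by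
      simp [Matrix.mul_apply, hD, Matrix.transpose_apply, Matrix.diagonal_apply, mul_ite, mul_zero, ite_mul, zero_mul, Finset.sum_ite_eq]
    rw [h2]
    refine Finset.sum_congr rfl (fun k _ => ?_)
    rw [nsmul_eq_mul, hW, pow_add]
    ring
  -- injectivity of W
  have hWinj : Function.Injective W.mulVecLin := by
    have key : ∀ v : Fin t → ℂ, W.mulVec v = 0 → v = 0 := by
      intro v hv
      set Sub : Matrix (Fin t) (Fin t) ℂ := W.submatrix (Fin.castLE ht) id with hSub
      have hSubT : Sub = (Matrix.vandermonde ρ)ᵀ := by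
        ext k l
        simp [hSub, hW, Matrix.vandermonde]
        rfl
      have hdet : Sub.det ≠ 0 := by
        rw [hSubT, Matrix.det_transpose]
        exact Matrix.det_vandermonde_ne_zero_iff.mpr hρinj
      have hSv : Sub.mulVec v = 0 := by
        funext k
        have : Sub.mulVec v k = W.mulVec v (Fin.castLE ht k) := rfl
        rw [this, hv]
        rfl
      have : Sub⁻¹.mulVec (Sub.mulVec v) = v := by
        rw [Matrix.mulVec_mulVec, Matrix.nonsing_inv_mul _ (isUnit_iff_ne_zero.mpr hdet),
          Matrix.one_mulVec]
      rw [← this, hSv, Matrix.mulVec_zero]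
    intro x y hxy
    have : W.mulVec (x - y) = 0 := by
      rw [Matrix.mulVec_sub]
      simpa [Matrix.mulVecLin_apply] using congrArg (· - W.mulVec y) hxy |>.trans (by simp)
    have := key _ this
    exact sub_eq_zero.mp this
  -- rank of W
  have hrankW : W.rank = t := by
    rw [Matrix.rank, LinearMap.finrank_range_of_inj hWinj]
    simp
  -- rank (W * X) = rank X
  have hrank_mul : ∀ (X : Matrix (Fin t) (Fin d) ℂ), (W * X).rank = X.rank := by
    intro X
    rw [Matrix.rank, Matrix.mulVecLin_mul, LinearMap.range_comp, Matrix.rank]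
    exact ((Submodule.equivMapOfInjective _ hWinj _).finrank_eq).symm
  -- D invertible
  have hDdet : IsUnit D.det := by
    rw [hD, Matrix.det_diagonal]
    refine isUnit_iff_ne_zero.mpr (Finset.prod_ne_zero_iff.mpr fun k _ => ?_)
    have : 0 < R.count (ρ k) := Multiset.count_pos.mpr (Multiset.mem_toFinset.mp (hρmem k))
    exact_mod_cast this.ne'
  have hrankH : (H.map (algebraMap ℝ ℂ)).rank = t := by
    rw [hfact, Matrix.mul_assoc, hrank_mul, Matrix.rank_mul_eq_right_of_isUnit_det _ _ hDdet,
      Matrix.rank_transpose, hrankW]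
  rw [← rank_map_complex H, hrankH]
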